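/- Let n ≥ 1 and b ∈ Mat_n. Suppose p, q : ℂ → Mat_n are twice differentiable and satisfy p''(z) = −(z/2) p(z) − b p(z) − 2 p(z) q(z) p(z) and q''(z) = −(z/2) q(z) − q(z) b − 2 q(z) p(z) q(z) for all z. For ζ ∈ ℂ define the 2×2 block matrices (with n×n blocks) B(ζ,z) = [[ζ·I, −q(z)], [p(z), −ζ·I]] and A(ζ,z) = [[8ζ²·I + 4 q(z) p(z) + z·I, −8ζ q(z) − 4 q'(z)], [8ζ p(z) − 4 p'(z), −8ζ²·I − 4 p(z) q(z) − z·I − 4b]]. Then for every ζ ∈ ℂ and every z, the isomonodromic Lax equation holds: ∂_z A(ζ,z) = [[I, 0], [0, −I]] + B(ζ,z) A(ζ,z) − A(ζ,z) B(ζ,z), where [[I,0],[0,−I]] = ∂_ζ B(ζ,z). -/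

import Mathlib

attribute [local instance] Matrix.normedAddCommGroup Matrix.normedSpace

/-- The matrix `B(ζ,z) = [[ζI, −q(z)], [p(z), −ζI]]`. -/
noncomputable def Blax (n : ℕ) (p q : ℂ → Matrix (Fin n) (Fin n) ℂ) (ζ z : ℂ) :
    Matrix (Fin n ⊕ Fin n) (Fin n ⊕ Fin n) ℂ :=
  Matrix.fromBlocks (ζ • 1) (-(q z)) (p z) (-(ζ • 1))

/-- The matrix `A(ζ,z) = [[8ζ²+4qp+z, −8ζq−4q'], [8ζp−4p', −8ζ²−4pq−z−4b]]`. -/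
noncomputable def Alax (n : ℕ) (b : Matrix (Fin n) (Fin n) ℂ)
    (p q : ℂ → Matrix (Fin n) (Fin n) ℂ) (ζ z : ℂ) :
    Matrix (Fin n ⊕ Fin n) (Fin n ⊕ Fin n) ℂ :=
  Matrix.fromBlocks
    ((8 * ζ^2) • 1 + 4 * (q z * p z) + z • 1)
    (-((8 * ζ) • q z) - 4 * deriv q z)
    ((8 * ζ) • p z - 4 * deriv p z)
    (-((8 * ζ^2) • 1) - 4 * (p z * q z) - z • 1 - 4 * b)

private lemma hasDerivAt_fromBlocks' {n : ℕ} {f g h k : ℂ → Matrix (Fin n) (Fin n) ℂ}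
    {f' g' h' k' : Matrix (Fin n) (Fin n) ℂ} {z : ℂ}
    (hf : HasDerivAt f f' z) (hg : HasDerivAt g g' z)
    (hh : HasDerivAt h h' z) (hk : HasDerivAt k k' z) :
    HasDerivAt (fun w => Matrix.fromBlocks (f w) (g w) (h w) (k w))
      (Matrix.fromBlocks f' g' h' k') z := by
  let L1 : Matrix (Fin n) (Fin n) ℂ →L[ℂ] Matrix (Fin n ⊕ Fin n) (Fin n ⊕ Fin n) ℂ :=
    LinearMap.toContinuousLinearMap
      { toFun := fun X => Matrix.fromBlocks X 0 0 0
        map_add' := by intro X Y; simp [Matrix.fromBlocks_add]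
        map_smul' := by intro c X; simp [Matrix.fromBlocks_smul] }
  let L2 : Matrix (Fin n) (Fin n) ℂ →L[ℂ] Matrix (Fin n ⊕ Fin n) (Fin n ⊕ Fin n) ℂ :=
    LinearMap.toContinuousLinearMap
      { toFun := fun X => Matrix.fromBlocks 0 X 0 0
        map_add' := by intro X Y; simp [Matrix.fromBlocks_add]
        map_smul' := by intro c X; simp [Matrix.fromBlocks_smul] }
  let L3 : Matrix (Fin n) (Fin n) ℂ →L[ℂ] Matrix (Fin n ⊕ Fin n) (Fin n ⊕ Fin n) ℂ :=
    LinearMap.toContinuousLinearMap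
      { toFun := fun X => Matrix.fromBlocks 0 0 X 0
        map_add' := by intro X Y; simp [Matrix.fromBlocks_add]
        map_smul' := by intro c X; simp [Matrix.fromBlocks_smul] }
  let L4 : Matrix (Fin n) (Fin n) ℂ →L[ℂ] Matrix (Fin n ⊕ Fin n) (Fin n ⊕ Fin n) ℂ :=
    LinearMap.toContinuousLinearMap
      { toFun := fun X => Matrix.fromBlocks 0 0 0 X
        map_add' := by intro X Y; simp [Matrix.fromBlocks_add]
        map_smul' := by intro c X; simp [Matrix.fromBlocks_smul] }
  have H := (((L1.hasFDerivAt.comp_hasDerivAt z hf).add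
      (L2.hasFDerivAt.comp_hasDerivAt z hg)).add
      (L3.hasFDerivAt.comp_hasDerivAt z hh)).add
      (L4.hasFDerivAt.comp_hasDerivAt z hk)
  have e : ∀ (a b c d : Matrix (Fin n) (Fin n) ℂ),
      L1 a + L2 b + L3 c + L4 d = Matrix.fromBlocks a b c d := by
    intro a b c d
    simp [L1, L2, L3, L4, Matrix.fromBlocks_add]
  have H' := H.congr_deriv (e f' g' h' k')
  have key : (fun w => Matrix.fromBlocks (f w) (g w) (h w) (k w)) = ⇑L1 ∘ f + ⇑L2 ∘ g + ⇑L3 ∘ h + ⇑L4 ∘ k := by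
    funext w
    exact (e (f w) (g w) (h w) (k w)).symm
  rw [key]
  exact H'

private noncomputable def mulCLM (n : ℕ) :
    Matrix (Fin n) (Fin n) ℂ →L[ℂ] Matrix (Fin n) (Fin n) ℂ →L[ℂ] Matrix (Fin n) (Fin n) ℂ :=
  LinearMap.toContinuousLinearMap
    (((LinearMap.toContinuousLinearMap :
        (Matrix (Fin n) (Fin n) ℂ →ₗ[ℂ] Matrix (Fin n) (Fin n) ℂ) ≃ₗ[ℂ]
        (Matrix (Fin n) (Fin n) ℂ →L[ℂ] Matrix (Fin n) (Fin n) ℂ)).toLinearMap).comp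
      (LinearMap.mul ℂ (Matrix (Fin n) (Fin n) ℂ)))

@[simp] private lemma mulCLM_apply (n : ℕ) (X Y : Matrix (Fin n) (Fin n) ℂ) :
    mulCLM n X Y = X * Y := by
  simp [mulCLM]

private lemma HasDerivAt.matMul {n : ℕ} {f g : ℂ → Matrix (Fin n) (Fin n) ℂ}
    {f' g' : Matrix (Fin n) (Fin n) ℂ} {z : ℂ}
    (hf : HasDerivAt f f' z) (hg : HasDerivAt g g' z) :
    HasDerivAt (fun w => f w * g w) (f' * g z + f z * g') z := by
  letI : NormedRing (Matrix (Fin n) (Fin n) ℂ) := Matrix.linftyOpNormedRing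
  letI : NormedAlgebra ℂ (Matrix (Fin n) (Fin n) ℂ) := Matrix.linftyOpNormedAlgebra
  exact hf.mul hg

private lemma num_mul_smul {n : ℕ} (c : ℕ) [c.AtLeastTwo]
    (M : Matrix (Fin n) (Fin n) ℂ) :
    (OfNat.ofNat c : Matrix (Fin n) (Fin n) ℂ) * M = (OfNat.ofNat c : ℂ) • M := by
  rw [Algebra.smul_def, map_ofNat]

private lemma four_mul_smul {n : ℕ} (M : Matrix (Fin n) (Fin n) ℂ) :
    (4 : Matrix (Fin n) (Fin n) ℂ) * M = (4 : ℂ) • M := num_mul_smul 4 M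

private lemma two_mul_smul {n : ℕ} (M : Matrix (Fin n) (Fin n) ℂ) :
    (2 : Matrix (Fin n) (Fin n) ℂ) * M = (2 : ℂ) • M := num_mul_smul 2 M

private lemma fromBlocks_sub {n : ℕ}
    (A B C D A' B' C' D' : Matrix (Fin n) (Fin n) ℂ) :
    Matrix.fromBlocks A B C D - Matrix.fromBlocks A' B' C' D' =
      Matrix.fromBlocks (A - A') (B - B') (C - C') (D - D') := by
  rw [sub_eq_add_neg, Matrix.fromBlocks_neg, Matrix.fromBlocks_add]
  simp [sub_eq_add_neg]

/-- isomonodromic Lax pair `A' = B_ζ + [B, A]` for the reduced NLS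
system, together with `B_ζ = [[I,0],[0,−I]]`. -/
theorem matrixNLS_lax_pair (n : ℕ) (hn : 1 ≤ n)
    (b : Matrix (Fin n) (Fin n) ℂ)
    (p q : ℂ → Matrix (Fin n) (Fin n) ℂ)
    (hp : Differentiable ℂ p) (hp' : Differentiable ℂ (deriv p))
    (hq : Differentiable ℂ q) (hq' : Differentiable ℂ (deriv q))
    (hpeq : ∀ z : ℂ, deriv (deriv p) z =
      -((z/2) • p z) - b * p z - 2 * (p z * q z * p z))
    (hqeq : ∀ z : ℂ, deriv (deriv q) z =
      -((z/2) • q z) - q z * b - 2 * (q z * p z * q z)) :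
    ∀ ζ z : ℂ,
      deriv (fun w => Alax n b p q ζ w) z =
        Matrix.fromBlocks 1 0 0 (-1)
          + Blax n p q ζ z * Alax n b p q ζ z - Alax n b p q ζ z * Blax n p q ζ z ∧
      deriv (fun w => Blax n p q w z) ζ = Matrix.fromBlocks 1 0 0 (-1) := by
  intro ζ z
  constructor
  · have hA : HasDerivAt (fun w => Alax n b p q ζ w)
        (Matrix.fromBlocks
          (0 + (4 : ℂ) • (deriv q z * p z + q z * deriv p z) + (1 : ℂ) • 1)
          (-((8 * ζ) • deriv q z) - (4 : ℂ) • deriv (deriv q) z)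
          ((8 * ζ) • deriv p z - (4 : ℂ) • deriv (deriv p) z)
          (0 - (4 : ℂ) • (deriv p z * q z + p z * deriv q z) - (1 : ℂ) • 1 - 0)) z := by
      unfold Alax
      simp only [four_mul_smul]
      exact hasDerivAt_fromBlocks'
        (((hasDerivAt_const z _).add
            (((hq z).hasDerivAt.matMul (hp z).hasDerivAt).const_smul (4 : ℂ))).add
          ((hasDerivAt_id z).smul_const 1))
        ((((hq z).hasDerivAt.const_smul (8 * ζ)).neg).sub
          ((hq' z).hasDerivAt.const_smul (4 : ℂ)))
        (((hp z).hasDerivAt.const_smul (8 * ζ)).sub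
          ((hp' z).hasDerivAt.const_smul (4 : ℂ)))
        ((((hasDerivAt_const z _).sub
            (((hp z).hasDerivAt.matMul (hq z).hasDerivAt).const_smul (4 : ℂ))).sub
          ((hasDerivAt_id z).smul_const 1)).sub (hasDerivAt_const z _))
    rw [show deriv (fun w => Alax n b p q ζ w) z = _ from hA.deriv, Blax, Alax]
    rw [Matrix.fromBlocks_multiply, Matrix.fromBlocks_multiply, Matrix.fromBlocks_add,
      fromBlocks_sub, Matrix.fromBlocks_inj]
    rw [hpeq z, hqeq z]
    refine ⟨?_, ?_, ?_, ?_⟩ <;>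
    · simp only [four_mul_smul, two_mul_smul, mul_add, add_mul, mul_sub, sub_mul, mul_neg, neg_mul,
        smul_mul_assoc, mul_smul_comm, smul_smul, smul_add, smul_sub, smul_neg,
        Matrix.mul_one, Matrix.one_mul, mul_assoc, one_smul]
      module
  · have hB : HasDerivAt (fun w => Blax n p q w z)
        (Matrix.fromBlocks ((1 : ℂ) • 1) 0 0 (-((1 : ℂ) • 1))) ζ := by
      unfold Blax
      exact hasDerivAt_fromBlocks'
        ((hasDerivAt_id ζ).smul_const 1)
        (hasDerivAt_const ζ _)
        (hasDerivAt_const ζ _)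
        (((hasDerivAt_id ζ).smul_const 1).neg)
    rw [show deriv (fun w => Blax n p q w z) ζ = _ from hB.deriv]
    simp
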